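/- Let m > 22 be an integer, α = (m-22)/(m²+m-2), r = (m, 1, 1)^T, d̄ = (α, α, 1-(m+1)α)^T, and C the 3×3 cyclic permutation matrix sending 1→2→3→1 (C(1,2)=C(2,3)=C(3,1)=1). Then for every real t, det(zI - (C - t·d̄·r^T)) = z³ - 1 + t(z² + z + 22). -/

import Mathlib

set_option maxHeartbeats 1000000


open Matrix

theorem stmt11 (m : ℕ) (hm : 22 < m) (t : ℝ) (z : ℂ) :
    let α : ℝ := ((m : ℝ) - 22) / ((m : ℝ) ^ 2 + m - 2)
    let C : Matrix (Fin 3) (Fin 3) ℂ := !![0, 1, 0; 0, 0, 1; 1, 0, 0]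
    let r : Fin 3 → ℂ := ![(m : ℂ), 1, 1]
    let dbar : Fin 3 → ℂ := ![(α : ℂ), (α : ℂ), 1 - ((m : ℂ) + 1) * (α : ℂ)]
    (z • (1 : Matrix (Fin 3) (Fin 3) ℂ) - (C - (t : ℂ) • Matrix.of (fun i j => dbar i * r j))).det
      = z ^ 3 - 1 + (t : ℂ) * (z ^ 2 + z + 22) := by
  intro α C r dbar
  have hdR : ((m : ℝ) ^ 2 + m - 2) ≠ 0 := by
    have : (23 : ℝ) ≤ (m : ℝ) := by exact_mod_cast hm
    nlinarith
  have hd : ((m : ℂ) ^ 2 + m - 2) ≠ 0 := by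
    intro h
    apply hdR
    have : (((m : ℝ) ^ 2 + m - 2 : ℝ) : ℂ) = 0 := by push_cast; push_cast at h; linear_combination h
    exact_mod_cast this
  have hα : (α : ℂ) = ((m : ℂ) - 22) / ((m : ℂ) ^ 2 + m - 2) := by
    simp only [α]
    push_cast
    ring
  simp only [Matrix.det_fin_three, Matrix.sub_apply, Matrix.smul_apply, Matrix.one_apply,
    Matrix.of_apply, C, r, dbar, hα]
  simp [Matrix.cons_val_zero, Matrix.cons_val_one, Matrix.vecHead, Matrix.vecTail]
  have hd' : (m : ℂ) * (m + 1) - 2 ≠ 0 := by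
    rw [show (m : ℂ) * (m + 1) - 2 = m ^ 2 + m - 2 by ring]; exact hd
  field_simp
  ring
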